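/- Let I, J, K be a partition of {1,…,n} and let x ∈ X be arbitrary. The following are equivalent: (i) there exist functions f on the (I∪K)-subtuples of Y and g on the (J∪K)-subtuples of Y such that P(y|x) = f(y_I, y_K) · g(y_J, y_K) for all y ∈ Y; (ii) ⟨u(x), v_H(y)⟩ = 0 for all y ∈ Y and all H ⊆ {1,…,n} with H ∩ I ≠ ∅ and H ∩ J ≠ ∅. -/

import Mathlib

open Finset
open scoped RealInnerProductSpace

/-- Averaging operator π_J. -/
noncomputable def piAvg {ι : Type*} [Fintype ι] [DecidableEq ι] {Z : ι → Type*}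
    [∀ i, Fintype (Z i)] [∀ i, DecidableEq (Z i)] {V : Type*} [AddCommGroup V] [Module ℝ V]
    (J : Finset ι) (w : (∀ i, Z i) → V) : (∀ i, Z i) → V :=
  fun z => (∏ i ∈ Jᶜ, (Fintype.card (Z i) : ℝ))⁻¹ •
    ∑ z' ∈ Finset.univ.filter (fun z' : ∀ i, Z i => ∀ i ∈ J, z' i = z i), w z'

/-- Interaction projection Q_I. -/
noncomputable def Qop {ι : Type*} [Fintype ι] [DecidableEq ι] {Z : ι → Type*}
    [∀ i, Fintype (Z i)] [∀ i, DecidableEq (Z i)] {V : Type*} [AddCommGroup V] [Module ℝ V]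
    (I : Finset ι) (w : (∀ i, Z i) → V) : (∀ i, Z i) → V :=
  ∑ J ∈ I.powerset, ((-1 : ℝ) ^ (I \ J).card) • piAvg J w

section auxLemmas
set_option linter.unusedSectionVars false
variable {ι : Type*} [Fintype ι] [DecidableEq ι] {Z : ι → Type*}
    [∀ i, Fintype (Z i)] [∀ i, Nonempty (Z i)] [∀ i, DecidableEq (Z i)]

/-- piAvg J w only depends on coordinates in J. -/
lemma piAvg_depends (J : Finset ι) (w : (∀ i, Z i) → ℝ) (y y' : ∀ i, Z i)
    (h : ∀ i ∈ J, y i = y' i) : piAvg J w y = piAvg J w y' := by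
  unfold piAvg
  congr 1
  apply Finset.sum_congr _ (fun _ _ => rfl)
  apply Finset.filter_congr
  intro z _
  constructor
  · intro hz i hi; rw [hz i hi, h i hi]
  · intro hz i hi; rw [hz i hi, ← h i hi]

/-- Inserting a coordinate that `a` doesn't depend on doesn't change piAvg. -/
lemma piAvg_insert (S : Finset ι) (a : (∀ i, Z i) → ℝ)
    (ha : ∀ z z', (∀ j ∈ S, z j = z' j) → a z = a z')
    {i : ι} (hiS : i ∉ S) {J : Finset ι} (hiJ : i ∉ J) (y : ∀ i, Z i) :
    piAvg (insert i J) a y = piAvg J a y := by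
  have hsum : ∑ z' ∈ Finset.univ.filter (fun z' : ∀ i, Z i => ∀ j ∈ J, z' j = y j), a z'
      = (Fintype.card (Z i) : ℝ) *
        ∑ z' ∈ Finset.univ.filter (fun z' : ∀ i, Z i => ∀ j ∈ insert i J, z' j = y j), a z' := by
    have step : ∑ z' ∈ Finset.univ.filter (fun z' : ∀ i, Z i => ∀ j ∈ J, z' j = y j), a z'
        = ∑ p ∈ (Finset.univ : Finset (Z i)) ×ˢ
            (Finset.univ.filter (fun z' : ∀ i, Z i => ∀ j ∈ insert i J, z' j = y j)), a p.2 := by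
      apply Finset.sum_nbij' (i := fun z => (z i, Function.update z i (y i)))
        (j := fun p => Function.update p.2 i p.1)
      · intro z hz
        simp only [Finset.mem_filter, Finset.mem_univ, true_and] at hz
        simp only [Finset.mem_product, Finset.mem_filter, Finset.mem_univ, true_and]
        intro j hj
        rcases Finset.mem_insert.1 hj with rfl | hjJ
        · simp
        · have hji : j ≠ i := by rintro rfl; exact hiJ hjJ
          rw [Function.update_of_ne hji]
          exact hz j hjJ
      · intro p hp
        simp only [Finset.mem_product, Finset.mem_filter, Finset.mem_univ, true_and] at hp
        simp only [Finset.mem_filter, Finset.mem_univ, true_and]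
        intro j hjJ
        have hji : j ≠ i := by rintro rfl; exact hiJ hjJ
        rw [Function.update_of_ne hji]
        exact hp j (Finset.mem_insert_of_mem hjJ)
      · intro z hz
        ext j
        rcases eq_or_ne j i with rfl | hne
        · simp
        · simp [Function.update_of_ne hne]
      · intro p hp
        simp only [Finset.mem_product, Finset.mem_filter, Finset.mem_univ, true_and] at hp
        have hpi : p.2 i = y i := hp i (Finset.mem_insert_self i J)
        have h2 : Function.update (Function.update p.2 i p.1) i (y i) = p.2 := by
          ext j
          rcases eq_or_ne j i with rfl | hne
          · simp [hpi]
          · simp [Function.update_of_ne hne]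
        simp [h2]
      · intro z hz
        have : a z = a (Function.update z i (y i)) := by
          apply ha
          intro j hjS
          have hji : j ≠ i := by rintro rfl; exact hiS hjS
          rw [Function.update_of_ne hji]
        simpa using this
    rw [step, Finset.sum_product]
    simp [Finset.sum_const, nsmul_eq_mul]
  have hcard : ∏ k ∈ Jᶜ, (Fintype.card (Z k) : ℝ)
      = (Fintype.card (Z i) : ℝ) * ∏ k ∈ (insert i J)ᶜ, (Fintype.card (Z k) : ℝ) := by
    have hc : (insert i J)ᶜ = Jᶜ.erase i := by
      ext j; simp [Finset.mem_insert, not_or, and_comm]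
    rw [hc]
    exact (Finset.mul_prod_erase _ _ (Finset.mem_compl.2 hiJ)).symm
  have hpos : (Fintype.card (Z i) : ℝ) ≠ 0 := by
    exact_mod_cast (Fintype.card_pos).ne'
  unfold piAvg
  rw [hsum, hcard]
  simp only [smul_eq_mul, mul_inv]
  field_simp

/-- Qop H a = 0 when a is S-measurable but H has a coordinate outside S. -/
lemma Qop_eq_zero (S : Finset ι) (a : (∀ i, Z i) → ℝ)
    (ha : ∀ z z', (∀ j ∈ S, z j = z' j) → a z = a z')
    {H : Finset ι} {i : ι} (hiH : i ∈ H) (hiS : i ∉ S) (y : ∀ i, Z i) :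
    Qop H a y = 0 := by
  have hH : H = insert i (H.erase i) := (Finset.insert_erase hiH).symm
  unfold Qop
  rw [Finset.sum_apply, hH, Finset.sum_powerset_insert (Finset.notMem_erase i H),
    ← Finset.sum_add_distrib]
  apply Finset.sum_eq_zero
  intro J hJ
  have hJs : J ⊆ H.erase i := Finset.mem_powerset.1 hJ
  have hiJ : i ∉ J := fun h => Finset.notMem_erase i H (hJs h)
  have h1 : (insert i (H.erase i)) \ insert i J = (H.erase i) \ J := by
    ext x
    simp only [Finset.mem_sdiff, Finset.mem_insert, Finset.mem_erase, not_or]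
    constructor
    · rintro ⟨hx1, hx2, hx3⟩
      rcases hx1 with rfl | hx1
      · exact absurd rfl hx2
      · exact ⟨hx1, hx3⟩
    · rintro ⟨⟨hx0, hx1⟩, hx2⟩
      exact ⟨Or.inr ⟨hx0, hx1⟩, hx0, hx2⟩
  have h2 : (insert i (H.erase i)) \ J = insert i ((H.erase i) \ J) := by
    rw [Finset.insert_sdiff_of_notMem _ hiJ]
  have h3 : i ∉ (H.erase i) \ J := fun h => Finset.notMem_erase i H (Finset.mem_sdiff.1 h).1
  have hcard : ((insert i (H.erase i)) \ J).card = ((H.erase i) \ J).card + 1 := by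
    rw [h2, Finset.card_insert_of_notMem h3]
  have hins : piAvg (insert i J) a y = piAvg J a y := piAvg_insert S a ha hiS hiJ y
  simp only [Pi.smul_apply, smul_eq_mul, hins, hcard, h1, pow_succ]
  ring

lemma mobiusSignSum (T J : Finset ι) (hJT : J ⊆ T) :
    ∑ H ∈ T.powerset.filter (fun H => J ⊆ H), ((-1:ℝ)^(H\J).card)
      = if J = T then 1 else 0 := by
  have step : ∑ H ∈ T.powerset.filter (fun H => J ⊆ H), ((-1:ℝ)^(H\J).card)
      = ∑ D ∈ (T\J).powerset, ((-1:ℝ)^D.card) := by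
    apply Finset.sum_nbij' (i := fun H => H \ J) (j := fun D => J ∪ D)
    · intro H hH
      simp only [Finset.mem_filter, Finset.mem_powerset] at hH ⊢
      exact Finset.sdiff_subset_sdiff hH.1 (le_refl J)
    · intro D hD
      simp only [Finset.mem_powerset] at hD
      simp only [Finset.mem_filter, Finset.mem_powerset]
      exact ⟨Finset.union_subset hJT (hD.trans (Finset.sdiff_subset)), Finset.subset_union_left⟩
    · intro H hH
      simp only [Finset.mem_filter, Finset.mem_powerset] at hH
      exact Finset.union_sdiff_of_subset hH.2
    · intro D hD
      simp only [Finset.mem_powerset] at hD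
      have : Disjoint J D := Finset.disjoint_of_subset_right hD Finset.disjoint_sdiff
      rw [Finset.union_sdiff_cancel_left this]
    · intro H hH; rfl
  rw [step]
  have hint := @Finset.sum_powerset_neg_one_pow_card ι _ (T \ J)
  have hcast : ∑ D ∈ (T\J).powerset, ((-1:ℝ)^D.card)
      = ((∑ D ∈ (T\J).powerset, ((-1:ℤ)^D.card) : ℤ) : ℝ) := by push_cast; rfl
  rw [hcast, hint]
  by_cases h : T \ J = ∅
  · have : J = T := (Finset.union_sdiff_of_subset hJT) ▸ by rw [h, Finset.union_empty]
    simp [h, this]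
  · have : J ≠ T := fun hEq => h (by rw [hEq, Finset.sdiff_self])
    simp [h, this]

/-- Möbius inversion: sum of interaction projections over subsets of T is the averaging. -/
lemma sum_Qop (T : Finset ι) (w : (∀ i, Z i) → ℝ) (y : ∀ i, Z i) :
    ∑ H ∈ T.powerset, Qop H w y = piAvg T w y := by
  have expand : ∀ H ∈ T.powerset, Qop H w y
      = ∑ J ∈ T.powerset, (if J ⊆ H then ((-1:ℝ)^(H\J).card) * piAvg J w y else 0) := by
    intro H hH
    have hHT : H ⊆ T := Finset.mem_powerset.1 hH
    unfold Qop
    rw [Finset.sum_apply, ← Finset.sum_filter]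
    have hfil : T.powerset.filter (fun J => J ⊆ H) = H.powerset := by
      ext J
      simp only [Finset.mem_filter, Finset.mem_powerset]
      exact ⟨fun h => h.2, fun h => ⟨h.trans hHT, h⟩⟩
    rw [hfil]
    apply Finset.sum_congr rfl
    intro J hJ
    simp [smul_eq_mul]
  rw [Finset.sum_congr rfl expand, Finset.sum_comm]
  have inner : ∀ J ∈ T.powerset,
      ∑ H ∈ T.powerset, (if J ⊆ H then ((-1:ℝ)^(H\J).card) * piAvg J w y else 0)
      = (if J = T then 1 else 0) * piAvg J w y := by
    intro J hJ
    rw [← Finset.sum_filter, ← Finset.sum_mul, mobiusSignSum T J (Finset.mem_powerset.1 hJ)]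
  rw [Finset.sum_congr rfl inner]
  simp only [ite_mul, one_mul, zero_mul]
  rw [Finset.sum_ite_eq' T.powerset T (fun J => piAvg J w y)]
  simp [Finset.mem_powerset]

lemma piAvg_univ (w : (∀ i, Z i) → ℝ) (y : ∀ i, Z i) :
    piAvg (Finset.univ : Finset ι) w y = w y := by
  unfold piAvg
  have h1 : (Finset.univ : Finset ι)ᶜ = ∅ := Finset.compl_univ
  have h2 : Finset.univ.filter (fun z' : ∀ i, Z i => ∀ i ∈ (Finset.univ : Finset ι), z' i = y i)
      = {y} := by
    ext z
    simp only [Finset.mem_filter, Finset.mem_univ, true_and, Finset.mem_singleton]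
    constructor
    · intro h; ext i; exact h i trivial
    · rintro rfl; intro i _; rfl
  rw [h1, h2]
  simp

end auxLemmas

section innerLemmas
set_option linter.unusedSectionVars false
variable {ι : Type*} [Fintype ι] [DecidableEq ι] {Z : ι → Type*}
    [∀ i, Fintype (Z i)] [∀ i, Nonempty (Z i)] [∀ i, DecidableEq (Z i)]
    {V : Type*} [NormedAddCommGroup V] [InnerProductSpace ℝ V]

lemma inner_piAvg (u : V) (v : (∀ i, Z i) → V) (J : Finset ι) (y : ∀ i, Z i) :
    ⟪u, piAvg J v y⟫ = piAvg J (fun z => ⟪u, v z⟫) y := by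
  unfold piAvg
  rw [real_inner_smul_right, inner_sum]
  simp [smul_eq_mul]

lemma inner_Qop (u : V) (v : (∀ i, Z i) → V) (H : Finset ι) (y : ∀ i, Z i) :
    ⟪u, Qop H v y⟫ = Qop H (fun z => ⟪u, v z⟫) y := by
  unfold Qop
  rw [Finset.sum_apply, inner_sum, Finset.sum_apply]
  apply Finset.sum_congr rfl
  intro J _
  rw [Pi.smul_apply, Pi.smul_apply, real_inner_smul_right, inner_piAvg]
  simp

lemma Qop_add (a b : (∀ i, Z i) → ℝ) (H : Finset ι) (y : ∀ i, Z i) :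
    Qop H (fun z => a z + b z) y = Qop H a y + Qop H b y := by
  unfold Qop
  rw [Finset.sum_apply, Finset.sum_apply, Finset.sum_apply, ← Finset.sum_add_distrib]
  apply Finset.sum_congr rfl
  intro J _
  simp only [Pi.smul_apply, smul_eq_mul]
  have : piAvg J (fun z => a z + b z) y = piAvg J a y + piAvg J b y := by
    unfold piAvg
    rw [Finset.sum_add_distrib, smul_add]
  rw [this]
  ring

end innerLemmas

/-- for a fixed input `x`, conditional independence `Y_I ⊥ Y_J | Y_K` for
the softmax distribution `P(·|x)` is equivalent to `⟨u(x), v_H(y)⟩ = 0` for every `y` and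
every `H` meeting both `I` and `J`. -/
theorem condIndep_output_iff_orthogonal {n : ℕ}
    (X : Type*) [Fintype X] [Nonempty X]
    (Y : Fin n → Type*) [∀ j, Fintype (Y j)] [∀ j, Nonempty (Y j)] [∀ j, DecidableEq (Y j)]
    (V : Type*) [NormedAddCommGroup V] [InnerProductSpace ℝ V] [FiniteDimensional ℝ V]
    (u : X → V) (v : (∀ j, Y j) → V)
    (P : X → (∀ j, Y j) → ℝ)
    (hP : ∀ x y, P x y =
      Real.exp ⟪u x, v y⟫ / ∑ y' : ∀ j, Y j, Real.exp ⟪u x, v y'⟫)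
    (I J K : Finset (Fin n))
    (hIJ : Disjoint I J) (hIK : Disjoint I K) (hJK : Disjoint J K)
    (hIJK : I ∪ J ∪ K = Finset.univ)
    (x : X) :
    (∃ f g : (∀ j, Y j) → ℝ,
      (∀ y y' : ∀ j, Y j, (∀ j ∈ I ∪ K, y j = y' j) → f y = f y') ∧
      (∀ y y' : ∀ j, Y j, (∀ j ∈ J ∪ K, y j = y' j) → g y = g y') ∧
      (∀ y : ∀ j, Y j, P x y = f y * g y)) ↔
    (∀ (y : ∀ j, Y j) (H : Finset (Fin n)),
      (H ∩ I).Nonempty → (H ∩ J).Nonempty → ⟪u x, Qop H v y⟫ = 0) := by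
  classical
  set w : (∀ j, Y j) → ℝ := fun z => ⟪u x, v z⟫ with hwdef
  set Zc : ℝ := ∑ y' : ∀ j, Y j, Real.exp ⟪u x, v y'⟫ with hZcdef
  have hZpos : 0 < Zc := Finset.sum_pos (fun _ _ => Real.exp_pos _) Finset.univ_nonempty
  have hPy : ∀ y, P x y = Real.exp (w y) / Zc := fun y => hP x y
  have hinner : ∀ (H : Finset (Fin n)) (y : ∀ j, Y j), ⟪u x, Qop H v y⟫ = Qop H w y :=
    fun H y => inner_Qop (u x) v H y
  constructor
  · rintro ⟨f, g, hf, hg, hfg⟩ y H hHI hHJ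
    obtain ⟨i, hi⟩ := hHI
    obtain ⟨j, hj⟩ := hHJ
    rw [Finset.mem_inter] at hi hj
    have hfgpos : ∀ z, 0 < f z * g z := by
      intro z
      rw [← hfg z, hPy z]
      positivity
    have hfne : ∀ z, f z ≠ 0 := fun z h => by
      have := hfgpos z; rw [h, zero_mul] at this; exact lt_irrefl 0 this
    have hgne : ∀ z, g z ≠ 0 := fun z h => by
      have := hfgpos z; rw [h, mul_zero] at this; exact lt_irrefl 0 this
    set a : (∀ j, Y j) → ℝ := fun z => Real.log (|f z| * Zc) with hadef
    set b : (∀ j, Y j) → ℝ := fun z => Real.log (|g z|) with hbdef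
    have hwab : ∀ z, w z = a z + b z := by
      intro z
      have hexp : Real.exp (w z) = (|f z| * Zc) * |g z| := by
        have h1 : Real.exp (w z) = (f z * g z) * Zc := by
          have h := (hfg z).symm.trans (hPy z)
          field_simp at h
          linarith [h]
        rw [h1, ← abs_of_pos (hfgpos z), abs_mul]
        ring
      have hpos1 : 0 < |f z| * Zc := mul_pos (abs_pos.2 (hfne z)) hZpos
      have hpos2 : 0 < |g z| := abs_pos.2 (hgne z)
      rw [hadef, hbdef]
      rw [← Real.log_exp (w z), hexp, Real.log_mul hpos1.ne' hpos2.ne']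
    have ha : ∀ z z', (∀ j ∈ I ∪ K, z j = z' j) → a z = a z' := by
      intro z z' h
      simp only [hadef, hf z z' h]
    have hb : ∀ z z', (∀ j ∈ J ∪ K, z j = z' j) → b z = b z' := by
      intro z z' h
      simp only [hbdef, hg z z' h]
    have hjIK : j ∉ I ∪ K := by
      simp only [Finset.mem_union, not_or]
      exact ⟨Finset.disjoint_right.1 hIJ hj.2, Finset.disjoint_left.1 hJK hj.2⟩
    have hiJK : i ∉ J ∪ K := by
      simp only [Finset.mem_union, not_or]
      exact ⟨Finset.disjoint_left.1 hIJ hi.2, Finset.disjoint_left.1 hIK hi.2⟩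
    rw [hinner H y]
    have hsplit : Qop H w y = Qop H a y + Qop H b y := by
      have hwfun : w = fun z => a z + b z := funext hwab
      rw [hwfun, Qop_add]
    rw [hsplit, Qop_eq_zero (I ∪ K) a ha hj.1 hjIK y,
      Qop_eq_zero (J ∪ K) b hb hi.1 hiJK y, add_zero]
  · intro horth
    have hQ0 : ∀ (y : ∀ j, Y j) (H : Finset (Fin n)),
        (H ∩ I).Nonempty → (H ∩ J).Nonempty → Qop H w y = 0 := by
      intro y H h1 h2
      rw [← hinner]
      exact horth y H h1 h2
    have hdecomp : ∀ y, w y = piAvg (I ∪ K) w y + (piAvg (J ∪ K) w y - piAvg K w y) := by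
      intro y
      have h0 : w y = ∑ H ∈ (Finset.univ : Finset (Fin n)).powerset, Qop H w y := by
        rw [sum_Qop, piAvg_univ]
      have hpow : ∀ S : Finset (Fin n),
          (Finset.univ.powerset.filter (fun H : Finset (Fin n) => H ⊆ S)) = S.powerset := by
        intro S; ext H
        simp [Finset.mem_powerset, Finset.subset_univ]
      have hstep : ∀ H ∈ (Finset.univ : Finset (Fin n)).powerset, Qop H w y =
          ((if H ⊆ I ∪ K then Qop H w y else 0) + (if H ⊆ J ∪ K then Qop H w y else 0))
          - (if H ⊆ K then Qop H w y else 0) := by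
        intro H _
        by_cases h1 : H ⊆ I ∪ K <;> by_cases h2 : H ⊆ J ∪ K
        · have hK : H ⊆ K := by
            intro c hcH
            rcases Finset.mem_union.1 (h1 hcH) with hcI | hcK
            · rcases Finset.mem_union.1 (h2 hcH) with hcJ | hcK
              · exact absurd hcJ (Finset.disjoint_left.1 hIJ hcI)
              · exact hcK
            · exact hcK
          simp only [if_pos h1, if_pos h2, if_pos hK]
          ring
        · have hK : ¬ H ⊆ K := fun h => h2 (h.trans Finset.subset_union_right)
          simp only [if_pos h1, if_neg h2, if_neg hK]
          ring
        · have hK : ¬ H ⊆ K := fun h => h1 (h.trans Finset.subset_union_right)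
          simp only [if_neg h1, if_pos h2, if_neg hK]
          ring
        · have hK : ¬ H ⊆ K := fun h => h1 (h.trans Finset.subset_union_right)
          obtain ⟨i, hiH, hi⟩ := Finset.not_subset.1 h2
          obtain ⟨j, hjH, hjn⟩ := Finset.not_subset.1 h1
          have hiI : i ∈ I := by
            have hmem : i ∈ I ∪ J ∪ K := hIJK ▸ Finset.mem_univ i
            simp only [Finset.mem_union, not_or] at hmem hi
            tauto
          have hjJ : j ∈ J := by
            have hmem : j ∈ I ∪ J ∪ K := hIJK ▸ Finset.mem_univ j
            simp only [Finset.mem_union, not_or] at hmem hjn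
            tauto
          have hz := hQ0 y H ⟨i, Finset.mem_inter.2 ⟨hiH, hiI⟩⟩
            ⟨j, Finset.mem_inter.2 ⟨hjH, hjJ⟩⟩
          simp only [if_neg h1, if_neg h2, if_neg hK, hz]
          ring
      rw [Finset.sum_congr rfl hstep, Finset.sum_sub_distrib, Finset.sum_add_distrib,
        ← Finset.sum_filter, ← Finset.sum_filter, ← Finset.sum_filter,
        hpow, hpow, hpow, sum_Qop, sum_Qop, sum_Qop] at h0
      linarith [h0]
    refine ⟨fun z => Real.exp (piAvg (I ∪ K) w z) / Zc,
      fun z => Real.exp (piAvg (J ∪ K) w z - piAvg K w z), ?_, ?_, ?_⟩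
    · intro z z' hzz
      show Real.exp (piAvg (I ∪ K) w z) / Zc = Real.exp (piAvg (I ∪ K) w z') / Zc
      rw [piAvg_depends (I ∪ K) w z z' hzz]
    · intro z z' hzz
      show Real.exp (piAvg (J ∪ K) w z - piAvg K w z)
          = Real.exp (piAvg (J ∪ K) w z' - piAvg K w z')
      rw [piAvg_depends (J ∪ K) w z z' hzz,
        piAvg_depends K w z z' (fun i hi => hzz i (Finset.mem_union_right J hi))]
    · intro z
      rw [hPy z, hdecomp z, Real.exp_add]
      ring
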